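/- Let F = ∑_{i=0}^n a_i X^i ∈ ℂ[X] with a_n ≠ 0 and n ≥ 1, and write F = a_n·∏_{i=1}^n (X − z_i) with the roots z_1,…,z_n listed with multiplicity. Then the first Graeffe iterate of F satisfies F^{[1]} = a_n²·∏_{i=1}^n (X − z_i²). In particular, the leading coefficient of F^{[1]} is a_n² and the roots of F^{[1]} are exactly the squares of the roots of F, with corresponding multiplicities. -/

import Mathlib

open Polynomial Finset

/-- The even part `F_e = ∑_j a_{2j} X^j` of a polynomial `F = ∑ a_i X^i`. -/
noncomputable def evenPart (F : Polynomial ℂ) : Polynomial ℂ :=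
  ∑ j ∈ Finset.range (F.natDegree + 1), Polynomial.C (F.coeff (2 * j)) * Polynomial.X ^ j

/-- The odd part `F_o = ∑_j a_{2j+1} X^j` of a polynomial `F = ∑ a_i X^i`,
so that `F(X) = F_e(X²) + X·F_o(X²)`. -/
noncomputable def oddPart (F : Polynomial ℂ) : Polynomial ℂ :=
  ∑ j ∈ Finset.range (F.natDegree + 1), Polynomial.C (F.coeff (2 * j + 1)) * Polynomial.X ^ j

/-- The first Graeffe iterate `F^{[1]} := (−1)^n·(F_e² − X·F_o²)` where `n = deg F`. -/
noncomputable def graeffe (F : Polynomial ℂ) : Polynomial ℂ :=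
  (-1) ^ F.natDegree * (evenPart F ^ 2 - Polynomial.X * oddPart F ^ 2)

private lemma sum_range_two_mul (f : ℕ → ℂ) (n : ℕ) :
    ∑ i ∈ Finset.range (2 * n), f i = ∑ j ∈ Finset.range n, (f (2 * j) + f (2 * j + 1)) := by
  induction n with
  | zero => simp
  | succ m ih =>
    rw [Nat.mul_succ, Finset.sum_range_succ, Finset.sum_range_succ, Finset.sum_range_succ, ih]
    ring

private lemma eval_even_odd (F : Polynomial ℂ) (t : ℂ) :
    Polynomial.eval (t ^ 2) (evenPart F) + t * Polynomial.eval (t ^ 2) (oddPart F)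
      = Polynomial.eval t F := by
  have hlt : F.natDegree < 2 * (F.natDegree + 1) := by omega
  rw [Polynomial.eval_eq_sum_range' hlt, sum_range_two_mul]
  simp only [evenPart, oddPart, Polynomial.eval_finset_sum, Polynomial.eval_mul,
    Polynomial.eval_C, Polynomial.eval_pow, Polynomial.eval_X, Finset.mul_sum,
    ← Finset.sum_add_distrib]
  refine Finset.sum_congr rfl fun j _ => ?_
  rw [← pow_mul]
  ring

theorem graeffe_eq_prod_sq (n : ℕ) (hn : 1 ≤ n) (a : ℂ) (ha : a ≠ 0) (z : ℕ → ℂ)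
    (F : Polynomial ℂ)
    (hF : F = Polynomial.C a * ∏ i ∈ Finset.range n, (Polynomial.X - Polynomial.C (z i))) :
    graeffe F =
      Polynomial.C (a ^ 2) * ∏ i ∈ Finset.range n, (Polynomial.X - Polynomial.C ((z i) ^ 2)) := by
  have hdeg : F.natDegree = n := by
    rw [hF, Polynomial.natDegree_C_mul ha, Polynomial.natDegree_prod]
    · simp [Polynomial.natDegree_X_sub_C]
    · intro i _; exact Polynomial.X_sub_C_ne_zero _
  apply Polynomial.funext
  intro s
  obtain ⟨t, ht⟩ := IsAlgClosed.exists_pow_nat_eq (k := ℂ) s (n := 2) zero_lt_two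
  have h1 := eval_even_odd F t
  have h2 := eval_even_odd F (-t)
  rw [neg_pow, show ((-1:ℂ))^2 = 1 by norm_num, one_mul] at h2
  have hFt : Polynomial.eval t F = a * ∏ i ∈ Finset.range n, (t - z i) := by simp [hF, Polynomial.eval_prod]
  have hFmt : Polynomial.eval (-t) F = a * ∏ i ∈ Finset.range n, (-t - z i) := by simp [hF, Polynomial.eval_prod]
  rw [← ht]
  simp only [graeffe, Polynomial.eval_mul, Polynomial.eval_pow, Polynomial.eval_neg,
    Polynomial.eval_one, Polynomial.eval_sub, Polynomial.eval_X, Polynomial.eval_C, hdeg,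
    Polynomial.eval_prod]
  have key : Polynomial.eval (t ^ 2) (evenPart F) ^ 2 -
      t ^ 2 * Polynomial.eval (t ^ 2) (oddPart F) ^ 2
      = Polynomial.eval t F * Polynomial.eval (-t) F := by
    rw [← h1, ← h2]; ring
  rw [key, hFt, hFmt]
  have hprod : (∏ i ∈ Finset.range n, (t - z i)) * ∏ i ∈ Finset.range n, (-t - z i)
      = (-1 : ℂ) ^ n * ∏ i ∈ Finset.range n, (t ^ 2 - z i ^ 2) := by
    rw [← Finset.prod_mul_distrib]
    rw [show ((-1:ℂ))^n * ∏ i ∈ Finset.range n, (t ^ 2 - z i ^ 2)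
        = ∏ i ∈ Finset.range n, (-1 : ℂ) * (t ^ 2 - z i ^ 2) by
      rw [Finset.prod_mul_distrib, Finset.prod_const, Finset.card_range]]
    exact Finset.prod_congr rfl fun i _ => by ring
  calc (-1 : ℂ) ^ n * ((a * ∏ i ∈ Finset.range n, (t - z i)) *
        (a * ∏ i ∈ Finset.range n, (-t - z i)))
      = (-1:ℂ)^n * (a * a * ((∏ i ∈ Finset.range n, (t - z i)) *
        ∏ i ∈ Finset.range n, (-t - z i))) := by ring
    _ = (-1:ℂ)^n * (-1:ℂ)^n * (a^2 * ∏ i ∈ Finset.range n, (t ^ 2 - z i ^ 2)) := by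
        rw [hprod]; ring
    _ = a ^ 2 * ∏ i ∈ Finset.range n, (t ^ 2 - z i ^ 2) := by
        rw [← pow_add, ← two_mul, pow_mul]; norm_num
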